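/- Let X be a metric space and L a level set. The inverse multi-map C_L⁻¹ : ∂T_X^L ⇒ X of the canonical map is macro-uniform if and only if X has macro-uniform dimension zero (i.e., mesh 𝒞_δ(X) < ∞ for every δ < ∞). -/

import Mathlib

open scoped Classical

/-- The `s`-connected component of `x`. -/
def chainComp {X : Type*} [MetricSpace X] (s : ℝ) (x : X) : Set X :=
  {y | Relation.ReflTransGen (fun a b => dist a b ≤ s) x y}

/-- The canonical ultrametric distance between the branches `C_L(x)` and `C_L(y)` of
the canonical `L`-tower. -/
noncomputable def canonDist {X : Type*} [MetricSpace X] (L : Set ℝ) (x y : X) : ℝ :=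
  if ∀ l ∈ L, chainComp l x = chainComp l y then 0
  else sInf {l | l ∈ L ∧ chainComp l x = chainComp l y}

lemma chainComp_symm {X : Type*} [MetricSpace X] {s : ℝ} {x y : X}
    (h : y ∈ chainComp s x) : x ∈ chainComp s y :=
  (@Relation.ReflTransGen.symmetric _ _ ⟨fun a b hab => show dist b a ≤ s by
    rwa [dist_comm]⟩).symm _ _ h

lemma chainComp_eq_of_mem {X : Type*} [MetricSpace X] {s : ℝ} {x y : X}
    (h : y ∈ chainComp s x) : chainComp s x = chainComp s y := by
  ext z
  constructor
  · intro hz; exact Relation.ReflTransGen.trans (chainComp_symm h) hz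
  · intro hz; exact Relation.ReflTransGen.trans h hz

lemma mem_of_chainComp_eq {X : Type*} [MetricSpace X] {s : ℝ} {x y : X}
    (h : chainComp s x = chainComp s y) : y ∈ chainComp s x := by
  rw [h]; exact Relation.ReflTransGen.refl

lemma chainComp_mono {X : Type*} [MetricSpace X] {s t : ℝ} (hst : s ≤ t) {x y : X}
    (h : y ∈ chainComp s x) : y ∈ chainComp t x :=
  Relation.ReflTransGen.mono (fun a b hab => le_trans hab hst) x y h

/-- The inverse multi-map `C_L⁻¹ : ∂T_X^L ⇒ X` of the canonical map is macro-uniform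
(for every `δ < ∞` there is `ε < ∞` such that points whose branches are at distance
at most `δ` are at distance at most `ε`) if and only if `X` has macro-uniform
dimension zero (i.e. `mesh 𝒞_δ(X) < ∞` for all `δ < ∞`). -/
theorem canonMapInv_macroUniform_iff_macroDimZero {X : Type*} [MetricSpace X]
    (L : Set ℝ)
    (hLpos : ∀ l ∈ L, 0 < l)
    (hLsup : ∀ r : ℝ, ∃ l ∈ L, r ≤ l)
    (hLicc : ∀ a ∈ L, ∀ b ∈ L, (L ∩ Set.Icc a b).Finite)
    (hLinf : (∃ a ∈ L, (L ∩ Set.Iic a).Infinite) → ∀ ε : ℝ, 0 < ε → ∃ l ∈ L, l ≤ ε) :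
    (∀ δ : ℝ, ∃ ε : ℝ, ∀ x y : X, canonDist L x y ≤ δ → dist x y ≤ ε) ↔
      (∀ δ : ℝ, ∃ m : ℝ, ∀ x y : X, y ∈ chainComp δ x → dist x y ≤ m) := by
  constructor
  · intro h δ
    obtain ⟨l, hlL, hl⟩ := hLsup δ
    obtain ⟨ε, hε⟩ := h l
    refine ⟨ε, fun x y hxy => ?_⟩
    have heq : chainComp l x = chainComp l y :=
      chainComp_eq_of_mem (chainComp_mono hl hxy)
    apply hε
    rw [canonDist]
    split_ifs with hall
    · exact (hLpos l hlL).le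
    · exact csInf_le ⟨0, fun a ha => (hLpos a ha.1).le⟩ ⟨hlL, heq⟩
  · intro h δ
    obtain ⟨l₀, hl₀L, hl₀⟩ := hLsup (δ + 1)
    obtain ⟨m, hm⟩ := h l₀
    refine ⟨m, fun x y hxy => ?_⟩
    apply hm
    by_cases hall : ∀ l ∈ L, chainComp l x = chainComp l y
    · exact mem_of_chainComp_eq (hall l₀ hl₀L)
    · rw [canonDist, if_neg hall] at hxy
      set S : Set ℝ := {l | l ∈ L ∧ chainComp l x = chainComp l y} with hS
      obtain ⟨l₁, hl₁L, hl₁⟩ := hLsup (dist x y)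
      have hSne : S.Nonempty :=
        ⟨l₁, hl₁L, chainComp_eq_of_mem (Relation.ReflTransGen.single hl₁)⟩
      have hex : ∃ l ∈ S, l ≤ l₀ := by
        by_contra hc
        push_neg at hc
        have : l₀ ≤ sInf S := le_csInf hSne fun b hb => (hc b hb).le
        linarith
      obtain ⟨l, ⟨hlL, heq⟩, hll₀⟩ := hex
      exact chainComp_mono hll₀ (mem_of_chainComp_eq heq)
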